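/- arXiv:1410.8740 — 2 statements merged into one kernel-verified Lean document; each statement's English description precedes it below -/
import Mathlib

section
/- With X1 = σ1 W Y1 and X2 = σ2 W Y2 as in the Two-component model, the unique copula C of (X1, X2) is given on (0,1)^2 by C(u1,u2) = u1 + u2 - 1 + ∫_0^∞ F_{G1}( w / ((1-u1)^{-1/α1} - 1) ) · F_{G2}( w / ((1-u2)^{-1/α2} - 1) ) e^{-w} dw, where Gi ~ Gamma(αi,1). -/
open scoped ENNReal NNReal
open MeasureTheory ProbabilityTheory Real Set

/-- The cdf of the gamma distribution (removed from Mathlib; old definition restored). -/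
noncomputable def ProbabilityTheory.gammaCDFReal (a r : ℝ) : StieltjesFunction ℝ :=
  ProbabilityTheory.cdf (ProbabilityTheory.gammaMeasure a r)

/-- The Two-component copula with parameters `α1 α2` on `(0,1)²`. -/
noncomputable def twoComponentCopula (α1 α2 : ℝ) (u1 u2 : ℝ) : ℝ :=
  u1 + u2 - 1 + ∫ w in Ioi (0 : ℝ),
    ProbabilityTheory.gammaCDFReal α1 1 (w / ((1 - u1) ^ (-(1 / α1)) - 1)) *
      ProbabilityTheory.gammaCDFReal α2 1 (w / ((1 - u2) ^ (-(1 / α2)) - 1)) *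
        Real.exp (-w)

namespace TwoComp

lemma gamma_Iic {a : ℝ} (ha : 0 < a) (t : ℝ) :
    gammaMeasure a 1 (Iic t) = ENNReal.ofReal (gammaCDFReal a 1 t) := by
  have : IsProbabilityMeasure (gammaMeasure a 1) := isProbabilityMeasure_gammaMeasure ha one_pos
  rw [gammaCDFReal, cdf_eq_real, measureReal_def, ENNReal.ofReal_toReal (measure_ne_top _ _)]

lemma gammaCDF_nonneg {a : ℝ} (t : ℝ) : 0 ≤ gammaCDFReal a 1 t :=
  cdf_nonneg _ t

lemma gammaCDF_le_one {a : ℝ} (t : ℝ) : gammaCDFReal a 1 t ≤ 1 :=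
  cdf_le_one _ t

lemma gamma_singleton {a : ℝ} (t : ℝ) : gammaMeasure a 1 {t} = 0 := by
  rw [gammaMeasure, withDensity_apply _ (measurableSet_singleton t),
    Measure.restrict_eq_zero.mpr (by simp), lintegral_zero_measure]

lemma gamma_Iic_zero {a : ℝ} : gammaMeasure a 1 (Iic 0) = 0 := by
  rw [gammaMeasure, withDensity_apply _ measurableSet_Iic,
    lintegral_Iic_eq_lintegral_Iio_add_Icc _ (le_refl (0:ℝ)),
    lintegral_gammaPDF_of_nonpos (le_refl 0), Icc_self,
    Measure.restrict_eq_zero.mpr (by simp), lintegral_zero_measure, add_zero]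

lemma gamma_Ici {a : ℝ} (ha : 0 < a) (t : ℝ) :
    gammaMeasure a 1 (Ici t) = ENNReal.ofReal (1 - gammaCDFReal a 1 t) := by
  have hP : IsProbabilityMeasure (gammaMeasure a 1) := isProbabilityMeasure_gammaMeasure ha one_pos
  have hIio : gammaMeasure a 1 (Iio t) = ENNReal.ofReal (gammaCDFReal a 1 t) := by
    have : gammaMeasure a 1 (Iic t) = gammaMeasure a 1 (Iio t) + gammaMeasure a 1 {t} := by
      rw [← measure_union (by simp) (measurableSet_singleton t)]
      congr 1
      rw [← Iio_union_Icc_eq_Iic (le_refl t), Icc_self]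
    rw [gamma_singleton, add_zero] at this
    rw [← this, gamma_Iic ha]
  rw [← compl_Iio, measure_compl measurableSet_Iio (measure_ne_top _ _), hIio,
    measure_univ,
    eq_comm, ENNReal.ofReal_sub 1 (by exact cdf_nonneg (gammaMeasure a 1) t),
    ENNReal.ofReal_one]

lemma exp_lintegral (f : ℝ → ℝ≥0∞) (hf : Measurable f) :
    ∫⁻ w, f w ∂(expMeasure 1) = ∫⁻ w in Ioi 0, f w * ENNReal.ofReal (rexp (-w)) := by
  have hpdf : Measurable (gammaPDF 1 1) := (measurable_gammaPDFReal 1 1).ennreal_ofReal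
  rw [expMeasure, gammaMeasure, lintegral_withDensity_eq_lintegral_mul _ hpdf hf]
  simp only [Pi.mul_apply]
  rw [← lintegral_add_compl (fun w => gammaPDF 1 1 w * f w) (measurableSet_Ioi (a := (0:ℝ)))]
  have h2 : ∫⁻ w in (Ioi (0:ℝ))ᶜ, gammaPDF 1 1 w * f w = 0 := by
    rw [compl_Ioi]
    have : ∀ᵐ w ∂(volume.restrict (Iic (0:ℝ))), gammaPDF 1 1 w * f w = 0 := by
      filter_upwards [ae_restrict_mem measurableSet_Iic,
        ae_restrict_of_ae (μ := volume) (s := Iic 0)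
          (ae_iff.2 (by simp) : ∀ᵐ w : ℝ ∂volume, ¬ w = 0)] with w hw hw0
      rw [gammaPDF_of_neg (lt_of_le_of_ne hw hw0), zero_mul]
    rw [lintegral_congr_ae this, lintegral_zero]
  rw [h2, add_zero]
  refine setLIntegral_congr_fun measurableSet_Ioi (fun w hw => ?_)
  have hw' : (0:ℝ) < w := hw
  rw [gammaPDF_of_nonneg hw'.le, mul_comm]
  congr 1
  rw [Real.rpow_one, Real.Gamma_one, sub_self, Real.rpow_zero]
  norm_num


lemma gamma_ae_pos {a : ℝ} : ∀ᵐ g ∂(gammaMeasure a 1), 0 < g := by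
  rw [ae_iff]
  have h : {g : ℝ | ¬ 0 < g} = Iic 0 := by ext g; simp [not_lt]
  rw [h]; exact gamma_Iic_zero

lemma gamma_laplace {a s : ℝ} (ha : 0 < a) (hs : 0 ≤ s) :
    ∫⁻ g, ENNReal.ofReal (rexp (-(s * g))) ∂(gammaMeasure a 1)
      = ENNReal.ofReal ((1 + s) ^ (-a)) := by
  have h1s : (0:ℝ) < 1 + s := by linarith
  have hpdf : Measurable (gammaPDF a 1) := (measurable_gammaPDFReal a 1).ennreal_ofReal
  rw [gammaMeasure, lintegral_withDensity_eq_lintegral_mul _ hpdf (by fun_prop)]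
  simp only [Pi.mul_apply]
  have hpt : ∀ g : ℝ, gammaPDF a 1 g * ENNReal.ofReal (rexp (-(s * g)))
      = ENNReal.ofReal ((1 + s) ^ (-a)) * gammaPDF a (1 + s) g := by
    intro g
    rcases lt_or_ge g 0 with h | h
    · rw [gammaPDF_of_neg h, gammaPDF_of_neg h, zero_mul, mul_zero]
    · rw [gammaPDF_of_nonneg h, gammaPDF_of_nonneg h,
        ← ENNReal.ofReal_mul (by positivity), ← ENNReal.ofReal_mul (by positivity)]
      congr 1
      have hmul : ((1:ℝ) + s) ^ (-a) * (1 + s) ^ a = 1 := by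
        rw [← Real.rpow_add h1s]; simp
      have hexp : rexp (-(1 * g)) * rexp (-(s * g)) = rexp (-((1 + s) * g)) := by
        rw [← Real.exp_add]; congr 1; ring
      rw [one_rpow, ← hexp]
      have hG : Real.Gamma a ≠ 0 := (Real.Gamma_pos_of_pos ha).ne'
      field_simp
      linear_combination (-(g ^ (a - 1))) * hmul
  rw [lintegral_congr hpt, lintegral_const_mul _ (show Measurable (gammaPDF a (1+s)) from (measurable_gammaPDFReal a (1+s)).ennreal_ofReal),
    lintegral_gammaPDF_eq_one ha h1s, mul_one]

lemma marginal_int {a σ x : ℝ} (ha : 0 < a) (hx : 0 < x) :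
    ((expMeasure 1).prod (gammaMeasure a 1)) {p : ℝ × ℝ | σ * p.1 ≤ x * p.2}
      = ∫⁻ w in Ioi 0, ENNReal.ofReal ((1 - gammaCDFReal a 1 (σ * w / x)) * rexp (-w)) := by
  have hPG : IsProbabilityMeasure (gammaMeasure a 1) := isProbabilityMeasure_gammaMeasure ha one_pos
  have hPE : IsProbabilityMeasure (expMeasure 1) := isProbabilityMeasure_expMeasure one_pos
  have hS : MeasurableSet {p : ℝ × ℝ | σ * p.1 ≤ x * p.2} :=
    measurableSet_le (by fun_prop) (by fun_prop)
  rw [Measure.prod_apply hS]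
  have hFm : Measurable (fun y => (gammaCDFReal a 1 y : ℝ)) := (gammaCDFReal a 1).mono.measurable
  have h1 : ∀ w : ℝ, (gammaMeasure a 1) (Prod.mk w ⁻¹' {p : ℝ × ℝ | σ * p.1 ≤ x * p.2})
      = ENNReal.ofReal (1 - gammaCDFReal a 1 (σ * w / x)) := by
    intro w
    have hpre : Prod.mk w ⁻¹' {p : ℝ × ℝ | σ * p.1 ≤ x * p.2} = Ici (σ * w / x) := by
      ext g
      simp only [mem_preimage, mem_setOf_eq, mem_Ici, div_le_iff₀ hx, mul_comm x g]
    rw [hpre, gamma_Ici ha]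
  simp_rw [h1]
  rw [exp_lintegral (fun w => ENNReal.ofReal (1 - gammaCDFReal a 1 (σ * w / x)))
    ((measurable_const.sub (hFm.comp (by fun_prop))).ennreal_ofReal)]
  refine setLIntegral_congr_fun measurableSet_Ioi (fun w _ => ?_)
  rw [← ENNReal.ofReal_mul (by linarith [gammaCDF_le_one (a := a) (σ * w / x)])]

lemma marginal_val {a σ x : ℝ} (ha : 0 < a) (hσ : 0 < σ) (hx : 0 < x) :
    ((expMeasure 1).prod (gammaMeasure a 1)) {p : ℝ × ℝ | σ * p.1 ≤ x * p.2}
      = ENNReal.ofReal (1 - (1 + x / σ) ^ (-a)) := by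
  have hPG : IsProbabilityMeasure (gammaMeasure a 1) := isProbabilityMeasure_gammaMeasure ha one_pos
  have hPE : IsProbabilityMeasure (expMeasure 1) := isProbabilityMeasure_expMeasure one_pos
  have hs : (0:ℝ) ≤ x / σ := by positivity
  have hS : MeasurableSet {p : ℝ × ℝ | σ * p.1 ≤ x * p.2} :=
    measurableSet_le (by fun_prop) (by fun_prop)
  rw [Measure.prod_apply_symm hS]
  have h1 : ∀ g : ℝ, (expMeasure 1) ((fun w => (w, g)) ⁻¹' {p : ℝ × ℝ | σ * p.1 ≤ x * p.2})
      = ENNReal.ofReal (if 0 ≤ x * g / σ then 1 - rexp (-(1 * (x * g / σ))) else 0) := by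
    intro g
    have hpre : (fun w => (w, g)) ⁻¹' {p : ℝ × ℝ | σ * p.1 ≤ x * p.2} = Iic (x * g / σ) := by
      ext w
      simp only [mem_preimage, mem_setOf_eq, mem_Iic, le_div_iff₀ hσ, mul_comm σ w]
    rw [hpre, expMeasure, gammaMeasure, withDensity_apply _ measurableSet_Iic,
      show gammaPDF 1 1 = exponentialPDF 1 from rfl,
      lintegral_exponentialPDF_eq_antiDeriv one_pos]
  simp_rw [h1]
  have h2 : ∫⁻ g, ENNReal.ofReal (if 0 ≤ x * g / σ then 1 - rexp (-(1 * (x * g / σ))) else 0)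
        ∂(gammaMeasure a 1)
      = ∫⁻ g, (1 - ENNReal.ofReal (rexp (-((x / σ) * g)))) ∂(gammaMeasure a 1) := by
    refine lintegral_congr_ae ?_
    filter_upwards [gamma_ae_pos (a := a)] with g hg
    rw [if_pos (by positivity),
      show -(1 * (x * g / σ)) = -((x / σ) * g) by ring,
      ENNReal.ofReal_sub 1 (Real.exp_pos _).le, ENNReal.ofReal_one]
  rw [h2, lintegral_sub (by fun_prop) (by
      refine ne_of_lt (lt_of_le_of_lt ?_ (by norm_num : (1:ℝ≥0∞) < ⊤))
      calc ∫⁻ g, ENNReal.ofReal (rexp (-((x / σ) * g))) ∂(gammaMeasure a 1)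
          = ENNReal.ofReal ((1 + x / σ) ^ (-a)) := gamma_laplace ha hs
        _ ≤ 1 := ENNReal.ofReal_le_one.mpr
            (Real.rpow_le_one_of_one_le_of_nonpos (by linarith) (by linarith))
      ) (by
      filter_upwards [gamma_ae_pos (a := a)] with g hg
      exact ENNReal.ofReal_le_one.mpr (Real.exp_le_one_iff.mpr (by nlinarith))),
    lintegral_one, measure_univ, gamma_laplace ha hs,
    eq_comm, ENNReal.ofReal_sub 1 (Real.rpow_nonneg (by linarith) _), ENNReal.ofReal_one]

lemma joint_int {a1 a2 σ1 σ2 x1 x2 : ℝ} (ha1 : 0 < a1) (ha2 : 0 < a2)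
    (hx1 : 0 < x1) (hx2 : 0 < x2) :
    ((expMeasure 1).prod ((gammaMeasure a1 1).prod (gammaMeasure a2 1)))
        {p : ℝ × ℝ × ℝ | σ1 * p.1 ≤ x1 * p.2.1 ∧ σ2 * p.1 ≤ x2 * p.2.2}
      = ∫⁻ w in Ioi 0, ENNReal.ofReal ((1 - gammaCDFReal a1 1 (σ1 * w / x1)) *
          (1 - gammaCDFReal a2 1 (σ2 * w / x2)) * rexp (-w)) := by
  have hPG1 : IsProbabilityMeasure (gammaMeasure a1 1) := isProbabilityMeasure_gammaMeasure ha1 one_pos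
  have hPG2 : IsProbabilityMeasure (gammaMeasure a2 1) := isProbabilityMeasure_gammaMeasure ha2 one_pos
  have hPE : IsProbabilityMeasure (expMeasure 1) := isProbabilityMeasure_expMeasure one_pos
  have hS : MeasurableSet {p : ℝ × ℝ × ℝ | σ1 * p.1 ≤ x1 * p.2.1 ∧ σ2 * p.1 ≤ x2 * p.2.2} := by
    rw [setOf_and]
    exact (measurableSet_le (f := fun p : ℝ × ℝ × ℝ => σ1 * p.1)
        (g := fun p : ℝ × ℝ × ℝ => x1 * p.2.1) (by fun_prop) (by fun_prop)).inter
      (measurableSet_le (f := fun p : ℝ × ℝ × ℝ => σ2 * p.1)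
        (g := fun p : ℝ × ℝ × ℝ => x2 * p.2.2) (by fun_prop) (by fun_prop))
  rw [Measure.prod_apply hS]
  have hF1m : Measurable (fun y => (gammaCDFReal a1 1 y : ℝ)) := (gammaCDFReal a1 1).mono.measurable
  have hF2m : Measurable (fun y => (gammaCDFReal a2 1 y : ℝ)) := (gammaCDFReal a2 1).mono.measurable
  have h1 : ∀ w : ℝ,
      ((gammaMeasure a1 1).prod (gammaMeasure a2 1))
          (Prod.mk w ⁻¹' {p : ℝ × ℝ × ℝ | σ1 * p.1 ≤ x1 * p.2.1 ∧ σ2 * p.1 ≤ x2 * p.2.2})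
      = ENNReal.ofReal ((1 - gammaCDFReal a1 1 (σ1 * w / x1)) *
          (1 - gammaCDFReal a2 1 (σ2 * w / x2))) := by
    intro w
    have hpre : Prod.mk w ⁻¹' {p : ℝ × ℝ × ℝ | σ1 * p.1 ≤ x1 * p.2.1 ∧ σ2 * p.1 ≤ x2 * p.2.2}
        = (Ici (σ1 * w / x1)) ×ˢ (Ici (σ2 * w / x2)) := by
      ext g
      simp only [mem_preimage, mem_setOf_eq, mem_prod, mem_Ici, div_le_iff₀ hx1, div_le_iff₀ hx2,
        mul_comm x1 g.1, mul_comm x2 g.2]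
    rw [hpre, Measure.prod_prod, gamma_Ici ha1, gamma_Ici ha2,
      ← ENNReal.ofReal_mul (by linarith [gammaCDF_le_one (a := a1) (σ1 * w / x1)])]
  simp_rw [h1]
  rw [exp_lintegral (fun w => ENNReal.ofReal ((1 - gammaCDFReal a1 1 (σ1 * w / x1)) *
      (1 - gammaCDFReal a2 1 (σ2 * w / x2))))
    (((measurable_const.sub (hF1m.comp (by fun_prop))).mul
      (measurable_const.sub (hF2m.comp (by fun_prop)))).ennreal_ofReal)]
  refine setLIntegral_congr_fun measurableSet_Ioi (fun w _ => ?_)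
  rw [← ENNReal.ofReal_mul (mul_nonneg
    (by linarith [gammaCDF_le_one (a := a1) (σ1 * w / x1)])
    (by linarith [gammaCDF_le_one (a := a2) (σ2 * w / x2)]))]


lemma exp_integrableOn : IntegrableOn (fun w => rexp (-w)) (Ioi (0:ℝ)) := by
  simpa using exp_neg_integrableOn_Ioi 0 one_pos

lemma integrableOn_aux (h : ℝ → ℝ) (hm : Measurable h)
    (h0 : ∀ w, 0 ≤ h w) (hb : ∀ w, h w ≤ 1) :
    IntegrableOn (fun w => h w * rexp (-w)) (Ioi (0:ℝ)) := by
  refine Integrable.mono exp_integrableOn ((hm.mul (by fun_prop)).aestronglyMeasurable) ?_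
  refine ae_of_all _ fun w => ?_
  rw [Real.norm_eq_abs, Real.norm_eq_abs,
    abs_of_nonneg (mul_nonneg (h0 w) (Real.exp_pos _).le), abs_of_nonneg (Real.exp_pos _).le]
  nlinarith [h0 w, hb w, Real.exp_pos (-w)]

lemma toReal_lint (h : ℝ → ℝ) (hm : Measurable h)
    (h0 : ∀ w, 0 ≤ h w) (hb : ∀ w, h w ≤ 1) :
    (∫⁻ w in Ioi 0, ENNReal.ofReal (h w * rexp (-w))).toReal
      = ∫ w in Ioi 0, h w * rexp (-w) := by
  rw [← ofReal_integral_eq_lintegral_ofReal (integrableOn_aux h hm h0 hb)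
      (ae_of_all _ fun w => mul_nonneg (h0 w) (Real.exp_pos _).le),
    ENNReal.toReal_ofReal]
  exact setIntegral_nonneg measurableSet_Ioi fun w _ => mul_nonneg (h0 w) (Real.exp_pos _).le

lemma arg_eq {α σ x u : ℝ} (hα : 0 < α) (hσ : 0 < σ) (hx : 0 < x)
    (hu : u = 1 - (1 + x / σ) ^ (-α)) (w : ℝ) :
    w / ((1 - u) ^ (-(1 / α)) - 1) = σ * w / x := by
  have hb : (0:ℝ) ≤ 1 + x / σ := by positivity
  have h1 : (1:ℝ) - u = (1 + x / σ) ^ (-α) := by rw [hu]; ring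
  have h2 : ((1:ℝ) - u) ^ (-(1 / α)) = 1 + x / σ := by
    rw [h1, ← Real.rpow_mul hb, show -α * -(1 / α) = 1 by field_simp, Real.rpow_one]
  rw [h2, add_sub_cancel_left, div_div_eq_mul_div, mul_comm w σ]



lemma final_algebra {α1 α2 σ1 σ2 x1 x2 u1 u2 : ℝ}
    (hα1 : 0 < α1) (hα2 : 0 < α2) (hσ1 : 0 < σ1) (hσ2 : 0 < σ2)
    (hx1 : 0 < x1) (hx2 : 0 < x2)
    (hu1v : u1 = 1 - (1 + x1 / σ1) ^ (-α1))
    (hu2v : u2 = 1 - (1 + x2 / σ2) ^ (-α2))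
    (hu1i : u1 = ∫ w in Ioi 0, (1 - gammaCDFReal α1 1 (σ1 * w / x1)) * rexp (-w))
    (hu2i : u2 = ∫ w in Ioi 0, (1 - gammaCDFReal α2 1 (σ2 * w / x2)) * rexp (-w)) :
    (∫ w in Ioi 0, (1 - gammaCDFReal α1 1 (σ1 * w / x1)) *
        (1 - gammaCDFReal α2 1 (σ2 * w / x2)) * rexp (-w))
      = twoComponentCopula α1 α2 u1 u2 := by
  have hF1m : Measurable (fun w => (gammaCDFReal α1 1 (σ1 * w / x1) : ℝ)) :=
    (gammaCDFReal α1 1).mono.measurable.comp (by fun_prop)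
  have hF2m : Measurable (fun w => (gammaCDFReal α2 1 (σ2 * w / x2) : ℝ)) :=
    (gammaCDFReal α2 1).mono.measurable.comp (by fun_prop)
  have hb1 : ∀ w : ℝ, 0 ≤ gammaCDFReal α1 1 (σ1 * w / x1) ∧ gammaCDFReal α1 1 (σ1 * w / x1) ≤ 1 :=
    fun w => ⟨gammaCDF_nonneg _, gammaCDF_le_one _⟩
  have hb2 : ∀ w : ℝ, 0 ≤ gammaCDFReal α2 1 (σ2 * w / x2) ∧ gammaCDFReal α2 1 (σ2 * w / x2) ≤ 1 :=
    fun w => ⟨gammaCDF_nonneg _, gammaCDF_le_one _⟩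
  have hI1 : IntegrableOn (fun w => gammaCDFReal α1 1 (σ1 * w / x1) * rexp (-w)) (Ioi (0:ℝ)) :=
    integrableOn_aux _ hF1m (fun w => (hb1 w).1) (fun w => (hb1 w).2)
  have hI2 : IntegrableOn (fun w => gammaCDFReal α2 1 (σ2 * w / x2) * rexp (-w)) (Ioi (0:ℝ)) :=
    integrableOn_aux _ hF2m (fun w => (hb2 w).1) (fun w => (hb2 w).2)
  have hI12 : IntegrableOn (fun w => gammaCDFReal α1 1 (σ1 * w / x1) *
      gammaCDFReal α2 1 (σ2 * w / x2) * rexp (-w)) (Ioi (0:ℝ)) :=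
    integrableOn_aux _ (hF1m.mul hF2m)
      (fun w => mul_nonneg (hb1 w).1 (hb2 w).1)
      (fun w => mul_le_one₀ (hb1 w).2 (hb2 w).1 (hb2 w).2)
  -- the marginal integral identities
  have hm1 : ∫ w in Ioi (0:ℝ), gammaCDFReal α1 1 (σ1 * w / x1) * rexp (-w) = 1 - u1 := by
    have : u1 = (∫ w in Ioi (0:ℝ), rexp (-w))
        - ∫ w in Ioi (0:ℝ), gammaCDFReal α1 1 (σ1 * w / x1) * rexp (-w) := by
      rw [hu1i, ← integral_sub exp_integrableOn hI1]
      congr 1; funext w; ring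
    rw [integral_exp_neg_Ioi_zero] at this
    linarith
  have hm2 : ∫ w in Ioi (0:ℝ), gammaCDFReal α2 1 (σ2 * w / x2) * rexp (-w) = 1 - u2 := by
    have : u2 = (∫ w in Ioi (0:ℝ), rexp (-w))
        - ∫ w in Ioi (0:ℝ), gammaCDFReal α2 1 (σ2 * w / x2) * rexp (-w) := by
      rw [hu2i, ← integral_sub exp_integrableOn hI2]
      congr 1; funext w; ring
    rw [integral_exp_neg_Ioi_zero] at this
    linarith
  -- expand the product
  have hexpand : (∫ w in Ioi (0:ℝ), (1 - gammaCDFReal α1 1 (σ1 * w / x1)) *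
        (1 - gammaCDFReal α2 1 (σ2 * w / x2)) * rexp (-w))
      = (∫ w in Ioi (0:ℝ), rexp (-w))
        - (∫ w in Ioi (0:ℝ), gammaCDFReal α1 1 (σ1 * w / x1) * rexp (-w))
        - (∫ w in Ioi (0:ℝ), gammaCDFReal α2 1 (σ2 * w / x2) * rexp (-w))
        + ∫ w in Ioi (0:ℝ), gammaCDFReal α1 1 (σ1 * w / x1) *
            gammaCDFReal α2 1 (σ2 * w / x2) * rexp (-w) := by
    have hE1 : IntegrableOn (fun w => rexp (-w) -
        gammaCDFReal α1 1 (σ1 * w / x1) * rexp (-w)) (Ioi (0:ℝ)) := exp_integrableOn.sub hI1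
    have hE2 : IntegrableOn (fun w => (rexp (-w) - gammaCDFReal α1 1 (σ1 * w / x1) * rexp (-w)) -
        gammaCDFReal α2 1 (σ2 * w / x2) * rexp (-w)) (Ioi (0:ℝ)) := hE1.sub hI2
    rw [← integral_sub exp_integrableOn hI1, ← integral_sub hE1 hI2, ← integral_add hE2 hI12]
    congr 1; funext w; ring
  rw [hexpand, integral_exp_neg_Ioi_zero, hm1, hm2, twoComponentCopula]
  have hcong : (∫ w in Ioi (0:ℝ),
      gammaCDFReal α1 1 (w / ((1 - u1) ^ (-(1 / α1)) - 1)) *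
        gammaCDFReal α2 1 (w / ((1 - u2) ^ (-(1 / α2)) - 1)) * rexp (-w))
      = ∫ w in Ioi (0:ℝ), gammaCDFReal α1 1 (σ1 * w / x1) *
          gammaCDFReal α2 1 (σ2 * w / x2) * rexp (-w) := by
    refine integral_congr_ae (ae_of_all _ fun w => ?_)
    dsimp only
    rw [arg_eq hα1 hσ1 hx1 hu1v w, arg_eq hα2 hσ2 hx2 hu2v w]
  rw [hcong]
  ring

end TwoComp

open TwoComp in
/-- Sklar identity for the Two-component model: the (unique) copula `C` of
`(X1, X2) = (σ1 W Y1, σ2 W Y2)` is the Two-component copula: for `x1, x2 > 0`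
(where the marginal cdfs take values in `(0,1)`),
`H(x1,x2) = C(F_{X1}(x1), F_{X2}(x2))` with `C = twoComponentCopula α1 α2`. -/
theorem two_component_copula_sklar
    {Ω : Type*} [MeasureSpace Ω] [IsProbabilityMeasure (ℙ : Measure Ω)]
    (W Y1 Y2 : Ω → ℝ) (hWmeas : Measurable W)
    (hY1meas : Measurable Y1) (hY2meas : Measurable Y2)
    (hindep : iIndepFun ![W, Y1, Y2])
    (hW : Measure.map W ℙ = expMeasure 1)
    {α1 α2 : ℝ} (hα1 : 0 < α1) (hα2 : 0 < α2)
    (hY1 : Measure.map (fun ω => (Y1 ω)⁻¹) ℙ = gammaMeasure α1 1)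
    (hY2 : Measure.map (fun ω => (Y2 ω)⁻¹) ℙ = gammaMeasure α2 1)
    {σ1 σ2 : ℝ} (hσ1 : 0 < σ1) (hσ2 : 0 < σ2) :
    ∀ x1 x2 : ℝ, 0 < x1 → 0 < x2 →
      (ℙ {ω | σ1 * W ω * Y1 ω ≤ x1 ∧ σ2 * W ω * Y2 ω ≤ x2}).toReal
        = twoComponentCopula α1 α2
            (ℙ {ω | σ1 * W ω * Y1 ω ≤ x1}).toReal
            (ℙ {ω | σ2 * W ω * Y2 ω ≤ x2}).toReal := by
  intro x1 x2 hx1 hx2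
  have hY1' : Measurable fun ω => (Y1 ω)⁻¹ := hY1meas.inv
  have hY2' : Measurable fun ω => (Y2 ω)⁻¹ := hY2meas.inv
  -- null sets where Y_i is nonpositive
  have hNull1 : ℙ {ω | Y1 ω ≤ 0} = 0 := by
    have h0 : ℙ ((fun ω => (Y1 ω)⁻¹) ⁻¹' Iic 0) = 0 := by
      rw [← Measure.map_apply hY1' measurableSet_Iic, hY1, gamma_Iic_zero]
    exact measure_mono_null (fun ω h => by simpa using inv_nonpos.mpr (show _ ≤ (0:ℝ) from h)) h0
  have hNull2 : ℙ {ω | Y2 ω ≤ 0} = 0 := by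
    have h0 : ℙ ((fun ω => (Y2 ω)⁻¹) ⁻¹' Iic 0) = 0 := by
      rw [← Measure.map_apply hY2' measurableSet_Iic, hY2, gamma_Iic_zero]
    exact measure_mono_null (fun ω h => by simpa using inv_nonpos.mpr (show _ ≤ (0:ℝ) from h)) h0
  have hUnull : ℙ ({ω | Y1 ω ≤ 0} ∪ {ω | Y2 ω ≤ 0}) = 0 := measure_union_null hNull1 hNull2
  -- joint laws via independence
  have hmeasv : ∀ i, Measurable (![W, Y1, Y2] i) := by
    intro i; fin_cases i <;> simp_all
  have hmap1 : Measure.map (fun ω => (W ω, (Y1 ω)⁻¹)) ℙ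
      = (expMeasure 1).prod (gammaMeasure α1 1) := by
    have hIndepW1 : IndepFun W Y1 ℙ := by
      simpa using hindep.indepFun (show (0 : Fin 3) ≠ 1 by decide)
    rw [← hW, ← hY1]
    exact (indepFun_iff_map_prod_eq_prod_map_map hWmeas.aemeasurable hY1'.aemeasurable).mp
      (hIndepW1.comp measurable_id measurable_inv)
  have hmap2 : Measure.map (fun ω => (W ω, (Y2 ω)⁻¹)) ℙ
      = (expMeasure 1).prod (gammaMeasure α2 1) := by
    have hIndepW2 : IndepFun W Y2 ℙ := by
      simpa using hindep.indepFun (show (0 : Fin 3) ≠ 2 by decide)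
    rw [← hW, ← hY2]
    exact (indepFun_iff_map_prod_eq_prod_map_map hWmeas.aemeasurable hY2'.aemeasurable).mp
      (hIndepW2.comp measurable_id measurable_inv)
  have hmapPair : Measure.map (fun ω => ((Y1 ω)⁻¹, (Y2 ω)⁻¹)) ℙ
      = (gammaMeasure α1 1).prod (gammaMeasure α2 1) := by
    have h : IndepFun Y1 Y2 ℙ := by
      simpa using hindep.indepFun (show (1 : Fin 3) ≠ 2 by decide)
    rw [← hY1, ← hY2]
    exact (indepFun_iff_map_prod_eq_prod_map_map hY1'.aemeasurable hY2'.aemeasurable).mp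
      (h.comp measurable_inv measurable_inv)
  have hmap3 : Measure.map (fun ω => (W ω, ((Y1 ω)⁻¹, (Y2 ω)⁻¹))) ℙ
      = (expMeasure 1).prod ((gammaMeasure α1 1).prod (gammaMeasure α2 1)) := by
    have h : IndepFun (fun ω => (Y1 ω, Y2 ω)) W ℙ := by
      simpa using hindep.indepFun_prodMk hmeasv 1 2 0 (by decide) (by decide)
    have hWpair : IndepFun W (fun ω => ((Y1 ω)⁻¹, (Y2 ω)⁻¹)) ℙ :=
      h.symm.comp measurable_id (measurable_inv.prodMap measurable_inv)
    rw [← hW, ← hmapPair]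
    exact (indepFun_iff_map_prod_eq_prod_map_map hWmeas.aemeasurable
      ((hY1'.prodMk hY2').aemeasurable)).mp hWpair
  -- measurable sets
  have hS1 : MeasurableSet {p : ℝ × ℝ | σ1 * p.1 ≤ x1 * p.2} :=
    measurableSet_le (by fun_prop) (by fun_prop)
  have hS2 : MeasurableSet {p : ℝ × ℝ | σ2 * p.1 ≤ x2 * p.2} :=
    measurableSet_le (by fun_prop) (by fun_prop)
  have hS : MeasurableSet {p : ℝ × ℝ × ℝ | σ1 * p.1 ≤ x1 * p.2.1 ∧ σ2 * p.1 ≤ x2 * p.2.2} := by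
    rw [setOf_and]
    exact (measurableSet_le (f := fun p : ℝ × ℝ × ℝ => σ1 * p.1)
        (g := fun p : ℝ × ℝ × ℝ => x1 * p.2.1) (by fun_prop) (by fun_prop)).inter
      (measurableSet_le (f := fun p : ℝ × ℝ × ℝ => σ2 * p.1)
        (g := fun p : ℝ × ℝ × ℝ => x2 * p.2.2) (by fun_prop) (by fun_prop))
  -- pointwise translations
  have hiff1 : ∀ ω : Ω, 0 < Y1 ω → (σ1 * W ω * Y1 ω ≤ x1 ↔ σ1 * W ω ≤ x1 * (Y1 ω)⁻¹) := by
    intro ω hy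
    rw [← div_eq_mul_inv, le_div_iff₀ hy]
  have hiff2 : ∀ ω : Ω, 0 < Y2 ω → (σ2 * W ω * Y2 ω ≤ x2 ↔ σ2 * W ω ≤ x2 * (Y2 ω)⁻¹) := by
    intro ω hy
    rw [← div_eq_mul_inv, le_div_iff₀ hy]
  -- event identities
  have hA1 : ℙ {ω | σ1 * W ω * Y1 ω ≤ x1}
      = ((expMeasure 1).prod (gammaMeasure α1 1)) {p : ℝ × ℝ | σ1 * p.1 ≤ x1 * p.2} := by
    rw [← hmap1, Measure.map_apply (hWmeas.prodMk hY1') hS1]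
    have hset : {ω | σ1 * W ω * Y1 ω ≤ x1} \ {ω | Y1 ω ≤ 0}
        = ((fun ω => (W ω, (Y1 ω)⁻¹)) ⁻¹' {p : ℝ × ℝ | σ1 * p.1 ≤ x1 * p.2})
            \ {ω | Y1 ω ≤ 0} := by
      ext ω
      simp only [mem_diff, mem_setOf_eq, mem_preimage, not_le]
      exact ⟨fun ⟨h, hy⟩ => ⟨(hiff1 ω hy).mp h, hy⟩, fun ⟨h, hy⟩ => ⟨(hiff1 ω hy).mpr h, hy⟩⟩
    calc ℙ {ω | σ1 * W ω * Y1 ω ≤ x1}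
        = ℙ ({ω | σ1 * W ω * Y1 ω ≤ x1} \ {ω | Y1 ω ≤ 0}) := (measure_diff_null hNull1).symm
      _ = ℙ (((fun ω => (W ω, (Y1 ω)⁻¹)) ⁻¹' {p : ℝ × ℝ | σ1 * p.1 ≤ x1 * p.2})
            \ {ω | Y1 ω ≤ 0}) := by rw [hset]
      _ = _ := measure_diff_null hNull1
  have hA2 : ℙ {ω | σ2 * W ω * Y2 ω ≤ x2}
      = ((expMeasure 1).prod (gammaMeasure α2 1)) {p : ℝ × ℝ | σ2 * p.1 ≤ x2 * p.2} := by
    rw [← hmap2, Measure.map_apply (hWmeas.prodMk hY2') hS2]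
    have hset : {ω | σ2 * W ω * Y2 ω ≤ x2} \ {ω | Y2 ω ≤ 0}
        = ((fun ω => (W ω, (Y2 ω)⁻¹)) ⁻¹' {p : ℝ × ℝ | σ2 * p.1 ≤ x2 * p.2})
            \ {ω | Y2 ω ≤ 0} := by
      ext ω
      simp only [mem_diff, mem_setOf_eq, mem_preimage, not_le]
      exact ⟨fun ⟨h, hy⟩ => ⟨(hiff2 ω hy).mp h, hy⟩, fun ⟨h, hy⟩ => ⟨(hiff2 ω hy).mpr h, hy⟩⟩
    calc ℙ {ω | σ2 * W ω * Y2 ω ≤ x2}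
        = ℙ ({ω | σ2 * W ω * Y2 ω ≤ x2} \ {ω | Y2 ω ≤ 0}) := (measure_diff_null hNull2).symm
      _ = ℙ (((fun ω => (W ω, (Y2 ω)⁻¹)) ⁻¹' {p : ℝ × ℝ | σ2 * p.1 ≤ x2 * p.2})
            \ {ω | Y2 ω ≤ 0}) := by rw [hset]
      _ = _ := measure_diff_null hNull2
  have hAJ : ℙ {ω | σ1 * W ω * Y1 ω ≤ x1 ∧ σ2 * W ω * Y2 ω ≤ x2}
      = ((expMeasure 1).prod ((gammaMeasure α1 1).prod (gammaMeasure α2 1)))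
          {p : ℝ × ℝ × ℝ | σ1 * p.1 ≤ x1 * p.2.1 ∧ σ2 * p.1 ≤ x2 * p.2.2} := by
    rw [← hmap3, Measure.map_apply (hWmeas.prodMk (hY1'.prodMk hY2')) hS]
    have hset : {ω | σ1 * W ω * Y1 ω ≤ x1 ∧ σ2 * W ω * Y2 ω ≤ x2}
          \ ({ω | Y1 ω ≤ 0} ∪ {ω | Y2 ω ≤ 0})
        = ((fun ω => (W ω, ((Y1 ω)⁻¹, (Y2 ω)⁻¹))) ⁻¹'
            {p : ℝ × ℝ × ℝ | σ1 * p.1 ≤ x1 * p.2.1 ∧ σ2 * p.1 ≤ x2 * p.2.2})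
          \ ({ω | Y1 ω ≤ 0} ∪ {ω | Y2 ω ≤ 0}) := by
      ext ω
      simp only [mem_diff, mem_setOf_eq, mem_preimage, mem_union, not_or, not_le]
      exact ⟨fun ⟨⟨h1, h2⟩, hy1, hy2⟩ =>
          ⟨⟨(hiff1 ω hy1).mp h1, (hiff2 ω hy2).mp h2⟩, hy1, hy2⟩,
        fun ⟨⟨h1, h2⟩, hy1, hy2⟩ =>
          ⟨⟨(hiff1 ω hy1).mpr h1, (hiff2 ω hy2).mpr h2⟩, hy1, hy2⟩⟩
    calc ℙ {ω | σ1 * W ω * Y1 ω ≤ x1 ∧ σ2 * W ω * Y2 ω ≤ x2}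
        = ℙ ({ω | σ1 * W ω * Y1 ω ≤ x1 ∧ σ2 * W ω * Y2 ω ≤ x2}
            \ ({ω | Y1 ω ≤ 0} ∪ {ω | Y2 ω ≤ 0})) := (measure_diff_null hUnull).symm
      _ = ℙ (((fun ω => (W ω, ((Y1 ω)⁻¹, (Y2 ω)⁻¹))) ⁻¹'
            {p : ℝ × ℝ × ℝ | σ1 * p.1 ≤ x1 * p.2.1 ∧ σ2 * p.1 ≤ x2 * p.2.2})
          \ ({ω | Y1 ω ≤ 0} ∪ {ω | Y2 ω ≤ 0})) := by rw [hset]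
      _ = _ := measure_diff_null hUnull
  -- marginal values
  have hnn1 : (0:ℝ) ≤ 1 - (1 + x1 / σ1) ^ (-α1) := by
    have h := Real.rpow_le_one_of_one_le_of_nonpos
      (show (1:ℝ) ≤ 1 + x1 / σ1 by nlinarith [div_pos hx1 hσ1]) (by linarith : -α1 ≤ 0)
    linarith
  have hnn2 : (0:ℝ) ≤ 1 - (1 + x2 / σ2) ^ (-α2) := by
    have h := Real.rpow_le_one_of_one_le_of_nonpos
      (show (1:ℝ) ≤ 1 + x2 / σ2 by nlinarith [div_pos hx2 hσ2]) (by linarith : -α2 ≤ 0)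
    linarith
  have hu1v : (ℙ {ω | σ1 * W ω * Y1 ω ≤ x1}).toReal = 1 - (1 + x1 / σ1) ^ (-α1) := by
    rw [hA1, marginal_val hα1 hσ1 hx1, ENNReal.toReal_ofReal hnn1]
  have hu2v : (ℙ {ω | σ2 * W ω * Y2 ω ≤ x2}).toReal = 1 - (1 + x2 / σ2) ^ (-α2) := by
    rw [hA2, marginal_val hα2 hσ2 hx2, ENNReal.toReal_ofReal hnn2]
  have hF1m : Measurable (fun w => (gammaCDFReal α1 1 (σ1 * w / x1) : ℝ)) :=
    (gammaCDFReal α1 1).mono.measurable.comp (by fun_prop)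
  have hF2m : Measurable (fun w => (gammaCDFReal α2 1 (σ2 * w / x2) : ℝ)) :=
    (gammaCDFReal α2 1).mono.measurable.comp (by fun_prop)
  have hu1i : (ℙ {ω | σ1 * W ω * Y1 ω ≤ x1}).toReal
      = ∫ w in Ioi 0, (1 - gammaCDFReal α1 1 (σ1 * w / x1)) * rexp (-w) := by
    rw [hA1, marginal_int hα1 hx1]
    exact toReal_lint (fun w => 1 - gammaCDFReal α1 1 (σ1 * w / x1))
      (measurable_const.sub hF1m)
      (fun w => by linarith [gammaCDF_le_one (a := α1) (σ1 * w / x1)])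
      (fun w => by linarith [gammaCDF_nonneg (a := α1) (σ1 * w / x1)])
  have hu2i : (ℙ {ω | σ2 * W ω * Y2 ω ≤ x2}).toReal
      = ∫ w in Ioi 0, (1 - gammaCDFReal α2 1 (σ2 * w / x2)) * rexp (-w) := by
    rw [hA2, marginal_int hα2 hx2]
    exact toReal_lint (fun w => 1 - gammaCDFReal α2 1 (σ2 * w / x2))
      (measurable_const.sub hF2m)
      (fun w => by linarith [gammaCDF_le_one (a := α2) (σ2 * w / x2)])
      (fun w => by linarith [gammaCDF_nonneg (a := α2) (σ2 * w / x2)])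
  have hJ : (ℙ {ω | σ1 * W ω * Y1 ω ≤ x1 ∧ σ2 * W ω * Y2 ω ≤ x2}).toReal
      = ∫ w in Ioi 0, (1 - gammaCDFReal α1 1 (σ1 * w / x1)) *
          (1 - gammaCDFReal α2 1 (σ2 * w / x2)) * rexp (-w) := by
    rw [hAJ, joint_int hα1 hα2 hx1 hx2]
    exact toReal_lint (fun w => (1 - gammaCDFReal α1 1 (σ1 * w / x1)) *
        (1 - gammaCDFReal α2 1 (σ2 * w / x2)))
      ((measurable_const.sub hF1m).mul (measurable_const.sub hF2m))
      (fun w => mul_nonneg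
        (by linarith [gammaCDF_le_one (a := α1) (σ1 * w / x1)])
        (by linarith [gammaCDF_le_one (a := α2) (σ2 * w / x2)]))
      (fun w => mul_le_one₀
        (by linarith [gammaCDF_nonneg (a := α1) (σ1 * w / x1)])
        (by linarith [gammaCDF_le_one (a := α2) (σ2 * w / x2)])
        (by linarith [gammaCDF_nonneg (a := α2) (σ2 * w / x2)]))
  rw [hJ]
  exact final_algebra hα1 hα2 hσ1 hσ2 hx1 hx2 hu1v hu2v hu1i hu2i
end

section
/- Let φ: [0,1] → [0,∞] be continuous, strictly decreasing, convex with φ(1) = 0, and let φ^{[-1]} be its pseudo-inverse. Then C(u,v) = φ^{[-1]}(φ(u) + φ(v)) is a copula (grounded, 2-increasing, with uniform margins). -/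
open Set ENNReal

/-- Archimedean copulas: if `φ : [0,1] → [0,∞]` is continuous, strictly decreasing and
convex with `φ(1) = 0`, and `ψ` is its pseudo-inverse, then
`C(u,v) = ψ(φ(u) + φ(v))` is a copula: grounded, 2-increasing, with uniform margins. -/
theorem archimedean_generator_gives_copula
    (φ : ℝ → ℝ≥0∞) (ψ : ℝ≥0∞ → ℝ)
    (hcont : ContinuousOn φ (Icc (0:ℝ) 1))
    (hanti : StrictAntiOn φ (Icc (0:ℝ) 1))
    (hφ1 : φ 1 = 0)
    -- convexity of `φ` on `[0,1]`
    (hconv : ∀ x ∈ Icc (0:ℝ) 1, ∀ y ∈ Icc (0:ℝ) 1, ∀ t ∈ Icc (0:ℝ) 1,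
      φ (t * x + (1 - t) * y) ≤ ENNReal.ofReal t * φ x + ENNReal.ofReal (1 - t) * φ y)
    -- `ψ` is the pseudo-inverse of `φ`
    (hψ_inv : ∀ t : ℝ≥0∞, t ≤ φ 0 → ψ t ∈ Icc (0:ℝ) 1 ∧ φ (ψ t) = t)
    (hψ_top : ∀ t : ℝ≥0∞, φ 0 ≤ t → ψ t = 0) :
    let C : ℝ → ℝ → ℝ := fun u v => ψ (φ u + φ v)
    (∀ u ∈ Icc (0:ℝ) 1, C u 0 = 0 ∧ C 0 u = 0) ∧
    (∀ u ∈ Icc (0:ℝ) 1, C u 1 = u ∧ C 1 u = u) ∧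
    (∀ x1 ∈ Icc (0:ℝ) 1, ∀ y1 ∈ Icc (0:ℝ) 1, ∀ x2 ∈ Icc (0:ℝ) 1, ∀ y2 ∈ Icc (0:ℝ) 1,
      x1 ≤ y1 → x2 ≤ y2 → 0 ≤ C y1 y2 - C y1 x2 - C x1 y2 + C x1 x2) := by
  have h0mem : (0:ℝ) ∈ Icc (0:ℝ) 1 := ⟨le_rfl, zero_le_one⟩
  have hφ0 : ∀ m ∈ Icc (0:ℝ) 1, φ m ≤ φ 0 := fun m hm =>
    hanti.antitoneOn h0mem hm hm.1
  have hψmem : ∀ t, ψ t ∈ Icc (0:ℝ) 1 := by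
    intro t
    rcases le_total t (φ 0) with h | h
    · exact (hψ_inv t h).1
    · rw [hψ_top t h]; exact h0mem
  have hψφ : ∀ m ∈ Icc (0:ℝ) 1, ψ (φ m) = m := by
    intro m hm
    obtain ⟨hmem, heq⟩ := hψ_inv (φ m) (hφ0 m hm)
    exact hanti.injOn hmem hm heq
  have hψanti : ∀ s t, s ≤ t → ψ t ≤ ψ s := by
    intro s t hst
    rcases le_total (φ 0) t with h | h
    · rw [hψ_top t h]; exact (hψmem s).1
    · have hs : s ≤ φ 0 := hst.trans h
      obtain ⟨hsm, hse⟩ := hψ_inv s hs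
      obtain ⟨htm, hte⟩ := hψ_inv t h
      by_contra hlt
      push_neg at hlt
      have := hanti hsm htm hlt
      rw [hse, hte] at this
      exact absurd hst (not_le.2 this)
  have hφle : ∀ s, φ (ψ s) ≤ s := by
    intro s
    rcases le_total s (φ 0) with h | h
    · exact (hψ_inv s h).2.le
    · rw [hψ_top s h]; exact h
  -- convexity of ψ
  have hconvψ : ∀ s t : ℝ≥0∞, ∀ lam : ℝ, 0 ≤ lam → lam ≤ 1 →
      ψ (ENNReal.ofReal lam * s + ENNReal.ofReal (1-lam) * t) ≤
        lam * ψ s + (1-lam) * ψ t := by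
    intro s t lam h0 h1
    obtain ⟨hx0, hx1⟩ := hψmem s
    obtain ⟨hy0, hy1⟩ := hψmem t
    have hm : lam * ψ s + (1-lam) * ψ t ∈ Icc (0:ℝ) 1 := by
      constructor
      · nlinarith
      · nlinarith
    have h2 := hconv (ψ s) (hψmem s) (ψ t) (hψmem t) lam ⟨h0, h1⟩
    have h3 : φ (lam * ψ s + (1-lam) * ψ t) ≤
        ENNReal.ofReal lam * s + ENNReal.ofReal (1-lam) * t :=
      h2.trans (add_le_add (mul_le_mul_right (hφle s) _) (mul_le_mul_right (hφle t) _))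
    calc ψ (ENNReal.ofReal lam * s + ENNReal.ofReal (1-lam) * t)
        ≤ ψ (φ (lam * ψ s + (1-lam) * ψ t)) := hψanti _ _ h3
      _ = lam * ψ s + (1-lam) * ψ t := hψφ _ hm
  -- key rearrangement inequality
  have key : ∀ p r q : ℝ, 0 ≤ p → p ≤ r → r ≤ q →
      ψ (ENNReal.ofReal r) + ψ (ENNReal.ofReal (p + q - r)) ≤
      ψ (ENNReal.ofReal p) + ψ (ENNReal.ofReal q) := by
    intro p r q hp hpr hrq
    rcases eq_or_lt_of_le (hpr.trans hrq) with heq | hpq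
    · have h1 : r = p := le_antisymm (heq ▸ hrq) hpr
      rw [h1, show p + q - p = q by ring]
    · have hqp : 0 < q - p := by linarith
      set lam : ℝ := (q - r)/(q - p) with hlam
      have hl0 : 0 ≤ lam := div_nonneg (by linarith) hqp.le
      have hl1 : lam ≤ 1 := by rw [hlam, div_le_one hqp]; linarith
      have hq0 : 0 ≤ q := by linarith
      have hr0 : 0 ≤ r := by linarith
      have e1 : ENNReal.ofReal lam * ENNReal.ofReal p +
          ENNReal.ofReal (1-lam) * ENNReal.ofReal q = ENNReal.ofReal r := by
        rw [← ENNReal.ofReal_mul hl0, ← ENNReal.ofReal_mul (by linarith),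
            ← ENNReal.ofReal_add (mul_nonneg hl0 hp) (mul_nonneg (by linarith) hq0)]
        congr 1
        rw [hlam]
        field_simp
        ring
      have e2 : ENNReal.ofReal (1-lam) * ENNReal.ofReal p +
          ENNReal.ofReal (1-(1-lam)) * ENNReal.ofReal q = ENNReal.ofReal (p + q - r) := by
        rw [← ENNReal.ofReal_mul (by linarith), ← ENNReal.ofReal_mul (by linarith),
            ← ENNReal.ofReal_add (mul_nonneg (by linarith) hp)
              (mul_nonneg (by linarith) hq0)]
        congr 1
        rw [hlam]
        field_simp
        ring
      have k1 := hconvψ (ENNReal.ofReal p) (ENNReal.ofReal q) lam hl0 hl1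
      rw [e1] at k1
      have k2 := hconvψ (ENNReal.ofReal p) (ENNReal.ofReal q) (1-lam) (by linarith) (by linarith)
      rw [e2] at k2
      linarith
  intro C
  refine ⟨?_, ?_, ?_⟩
  · intro u hu
    constructor
    · show ψ (φ u + φ 0) = 0
      exact hψ_top _ le_add_self
    · show ψ (φ 0 + φ u) = 0
      exact hψ_top _ le_self_add
  · intro u hu
    constructor
    · show ψ (φ u + φ 1) = u
      rw [hφ1, add_zero]
      exact hψφ u hu
    · show ψ (φ 1 + φ u) = u
      rw [hφ1, zero_add]
      exact hψφ u hu
  · intro x1 hx1 y1 hy1 x2 hx2 y2 hy2 h1 h2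
    show 0 ≤ ψ (φ y1 + φ y2) - ψ (φ y1 + φ x2) - ψ (φ x1 + φ y2) + ψ (φ x1 + φ x2)
    have hba : φ y1 ≤ φ x1 := hanti.antitoneOn hx1 hy1 h1
    have hdc : φ y2 ≤ φ x2 := hanti.antitoneOn hx2 hy2 h2
    rcases eq_or_ne (φ x1) ⊤ with ha | ha
    · have e1 : ψ (φ x1 + φ y2) = 0 := by rw [ha, top_add]; exact hψ_top _ le_top
      have e2 : ψ (φ x1 + φ x2) = 0 := by rw [ha, top_add]; exact hψ_top _ le_top
      have := hψanti _ _ (add_le_add_right hdc (φ y1))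
      linarith
    · rcases eq_or_ne (φ x2) ⊤ with hc | hc
      · have e1 : ψ (φ y1 + φ x2) = 0 := by rw [hc, add_top]; exact hψ_top _ le_top
        have e2 : ψ (φ x1 + φ x2) = 0 := by rw [hc, add_top]; exact hψ_top _ le_top
        have := hψanti _ _ (add_le_add_left hba (φ y2))
        linarith
      · have hb : φ y1 ≠ ⊤ := ne_top_of_le_ne_top ha hba
        have hd : φ y2 ≠ ⊤ := ne_top_of_le_ne_top hc hdc
        have fp : φ y1 + φ y2 ≠ ⊤ := ENNReal.add_ne_top.2 ⟨hb, hd⟩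
        have fr : φ x1 + φ y2 ≠ ⊤ := ENNReal.add_ne_top.2 ⟨ha, hd⟩
        have fs : φ y1 + φ x2 ≠ ⊤ := ENNReal.add_ne_top.2 ⟨hb, hc⟩
        have fq : φ x1 + φ x2 ≠ ⊤ := ENNReal.add_ne_top.2 ⟨ha, hc⟩
        set p := (φ y1 + φ y2).toReal with hp
        set r := (φ x1 + φ y2).toReal with hr
        set s := (φ y1 + φ x2).toReal with hs
        set q := (φ x1 + φ x2).toReal with hq
        have hpr : p ≤ r :=
          (ENNReal.toReal_le_toReal fp fr).2 (add_le_add_left hba (φ y2))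
        have hrq : r ≤ q :=
          (ENNReal.toReal_le_toReal fr fq).2 (add_le_add_right hdc (φ x1))
        have hps : p + q - r = s := by
          rw [hp, hr, hs, hq, ENNReal.toReal_add hb hd, ENNReal.toReal_add ha hd,
            ENNReal.toReal_add hb hc, ENNReal.toReal_add ha hc]
          ring
        have hkey := key p r q ENNReal.toReal_nonneg hpr hrq
        rw [hps] at hkey
        rw [hp, hr, hs, hq, ENNReal.ofReal_toReal fp, ENNReal.ofReal_toReal fr,
          ENNReal.ofReal_toReal fs, ENNReal.ofReal_toReal fq] at hkey
        linarith
end
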